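/- (Theorem 5.) Let Z and H be finite alphabets, m ≥ 1, P a probability mass function on Z, and Q a learning kernel from Z^m to pmfs on H that is invariant under permutations of the training set, i.e., Q(·|S∘σ) = Q(·|S) for every S ∈ Z^m and every permutation σ of {1,…,m}. Let I(S_m, H) denote the mutual information (in nats) between the training set S_m ∼ P^{⊗m} and the inferred hypothesis H, and let I_P(Z_trn, H) denote the mutual affinity between a uniformly drawn training example and H. Then I_P(Z_trn, H) ≤ √(I(S_m, H)/(2m)). -/

import Mathlib

open Real

private lemma aux_hasDerivAt_h {t : ℝ} (ht : 0 < t) :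
    HasDerivAt (fun t : ℝ => (t+1)*Real.log t - 2*(t-1))
      (Real.log t + (t+1)/t - 2) t := by
  have h1 : HasDerivAt (fun t : ℝ => (t+1)*Real.log t)
      (1*Real.log t + (t+1)*t⁻¹) t := by
    exact (((hasDerivAt_id t).add_const 1)).mul (Real.hasDerivAt_log ht.ne')
  have h2 : HasDerivAt (fun t : ℝ => 2*(t-1)) 2 t := by
    simpa using ((hasDerivAt_id t).sub_const 1).const_mul 2
  have := h1.sub h2
  exact this.congr_deriv (by ring)

private lemma aux_h_mono : MonotoneOn (fun t : ℝ => (t+1)*Real.log t - 2*(t-1)) (Set.Ioi 0) := by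
  apply monotoneOn_of_deriv_nonneg (convex_Ioi 0)
  · apply ContinuousOn.sub
    · exact (continuousOn_id.add continuousOn_const).mul
        (Real.continuousOn_log.mono (by intro x hx; simpa using ne_of_gt hx))
    · fun_prop
  · intro x hx
    rw [interior_Ioi] at hx
    exact (aux_hasDerivAt_h hx).differentiableAt.differentiableWithinAt
  · intro x hx
    rw [interior_Ioi] at hx
    rw [(aux_hasDerivAt_h hx).deriv]
    have h2 := Real.one_sub_inv_le_log_of_pos hx
    have hx2 : (x+1)/x = 1 + x⁻¹ := by rw [add_div, div_eq_mul_inv, one_div]; rw [mul_inv_cancel₀ (ne_of_gt (Set.mem_Ioi.1 hx))]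
    rw [hx2]
    linarith

private lemma aux_h_nonneg {t : ℝ} (ht : 1 ≤ t) : 2*(t-1) ≤ (t+1)*Real.log t := by
  have := aux_h_mono (Set.mem_Ioi.2 one_pos) (Set.mem_Ioi.2 (lt_of_lt_of_le one_pos ht)) ht
  simp only [Real.log_one] at this
  nlinarith [this]

private lemma aux_h_nonpos {t : ℝ} (ht0 : 0 < t) (ht : t ≤ 1) :
    (t+1)*Real.log t ≤ 2*(t-1) := by
  have := aux_h_mono (Set.mem_Ioi.2 ht0) (Set.mem_Ioi.2 one_pos) ht
  simp only [Real.log_one] at this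
  nlinarith [this]

private lemma aux_hasDerivAt_g {t : ℝ} (ht : 0 < t) :
    HasDerivAt (fun t : ℝ => (2*t+4)*(t*Real.log t - t + 1) - 3*(t-1)^2)
      (2*(t*Real.log t - t + 1) + (2*t+4)*((Real.log t + 1) - 1) - 3*(2*(t-1))) t := by
  have h1 : HasDerivAt (fun t : ℝ => 2*t+4) 2 t := by
    simpa using ((hasDerivAt_id t).const_mul 2).add_const 4
  have h2 : HasDerivAt (fun t : ℝ => t*Real.log t - t + 1) ((Real.log t + 1) - 1) t :=
    ((Real.hasDerivAt_mul_log ht.ne').sub (hasDerivAt_id t)).add_const 1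
  have h3 : HasDerivAt (fun t : ℝ => 3*(t-1)^2) (3*(2*(t-1))) t := by
    simpa using (((hasDerivAt_id t).sub_const 1).pow 2).const_mul 3
  exact ((h1.mul h2).sub h3).congr_deriv (by ring)

private lemma aux_g_deriv {t : ℝ} (ht : 0 < t) :
    deriv (fun t : ℝ => (2*t+4)*(t*Real.log t - t + 1) - 3*(t-1)^2) t
      = 4*((t+1)*Real.log t - 2*(t-1)) := by
  rw [(aux_hasDerivAt_g ht).deriv]; ring

private lemma aux_g_cont : ContinuousOn
    (fun t : ℝ => (2*t+4)*(t*Real.log t - t + 1) - 3*(t-1)^2) (Set.Ioi (0:ℝ) ∪ Set.Ici (1:ℝ)) := by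
  apply Continuous.continuousOn
  exact (by fun_prop : Continuous fun t : ℝ => (2*t+4)).mul
    ((Real.continuous_mul_log.sub continuous_id).add continuous_const) |>.sub (by fun_prop)

private lemma aux_g_nonneg {t : ℝ} (ht : 0 < t) :
    3*(t-1)^2 ≤ (2*t+4)*(t*Real.log t - t + 1) := by
  set g := fun t : ℝ => (2*t+4)*(t*Real.log t - t + 1) - 3*(t-1)^2 with hg
  have hg1 : g 1 = 0 := by simp [hg]
  have key : 0 ≤ g t := by
    rcases le_or_gt t 1 with hle | hgt
    · have hanti : AntitoneOn g (Set.Ioc (0:ℝ) 1) := by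
        apply antitoneOn_of_deriv_nonpos (convex_Ioc 0 1)
        · exact aux_g_cont.mono (by intro x hx; exact Or.inl hx.1)
        · intro x hx
          rw [interior_Ioc] at hx
          exact (aux_hasDerivAt_g hx.1).differentiableAt.differentiableWithinAt
        · intro x hx
          rw [interior_Ioc] at hx
          rw [aux_g_deriv hx.1]
          have := aux_h_nonpos hx.1 hx.2.le
          linarith
      have := hanti (Set.mem_Ioc.2 ⟨ht, hle⟩) (Set.mem_Ioc.2 ⟨one_pos, le_refl 1⟩) hle
      rw [hg1] at this; exact this
    · have hmono : MonotoneOn g (Set.Ici (1:ℝ)) := by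
        apply monotoneOn_of_deriv_nonneg (convex_Ici 1)
        · exact aux_g_cont.mono (by intro x hx; exact Or.inr hx)
        · intro x hx
          rw [interior_Ici] at hx
          exact (aux_hasDerivAt_g (lt_trans one_pos hx)).differentiableAt.differentiableWithinAt
        · intro x hx
          rw [interior_Ici] at hx
          rw [aux_g_deriv (lt_trans one_pos hx)]
          have := aux_h_nonneg hx.le
          linarith
      have := hmono (Set.mem_Ici.2 (le_refl 1)) (Set.mem_Ici.2 hgt.le) hgt.le
      rw [hg1] at this; exact this
  simpa [hg] using key

private lemma aux_pointwise {a b : ℝ} (ha : 0 ≤ a) (hb : 0 ≤ b) (hab : 0 < a → 0 < b) :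
    3*(a-b)^2 ≤ (2*a+4*b)*(a*Real.log (a/b) - a + b) := by
  rcases eq_or_lt_of_le ha with h0 | hpos
  · rw [← h0]; simp; nlinarith
  · have hb' : 0 < b := hab hpos
    have ht : 0 < a/b := div_pos hpos hb'
    have key := aux_g_nonneg ht
    set t := a/b with hts
    have habt : a = t*b := (div_mul_cancel₀ a hb'.ne').symm
    rw [habt]
    nlinarith [mul_le_mul_of_nonneg_left key (sq_nonneg b)]

private lemma aux_psi_nonneg {a b : ℝ} (ha : 0 ≤ a) (hab : 0 < a → 0 < b) (hb : 0 ≤ b) :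
    0 ≤ a*Real.log (a/b) - a + b := by
  rcases eq_or_lt_of_le ha with h0 | hpos
  · rw [← h0]; simpa using hb
  · have hb' : 0 < b := hab hpos
    have h1 : Real.log (b/a) ≤ b/a - 1 := Real.log_le_sub_one_of_pos (div_pos hb' hpos)
    have h2 : Real.log (b/a) = - Real.log (a/b) := by
      rw [← Real.log_inv]; congr 1; field_simp
    rw [h2] at h1
    have h3 : 1 - b/a ≤ Real.log (a/b) := by linarith
    have := mul_le_mul_of_nonneg_left h3 hpos.le
    have h4 : a * (1 - b/a) = a - b := by field_simp
    nlinarith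

private lemma aux_kl_nonneg {ι : Type*} [Fintype ι] (p q : ι → ℝ)
    (hp : ∀ i, 0 ≤ p i) (hq : ∀ i, 0 ≤ q i)
    (hps : ∑ i, p i = 1) (hqs : ∑ i, q i = 1) (hpq : ∀ i, 0 < p i → 0 < q i) :
    0 ≤ ∑ i, p i * Real.log (p i / q i) := by
  have h : ∑ i, p i * Real.log (p i / q i)
      = ∑ i, (p i * Real.log (p i / q i) - p i + q i) := by
    rw [Finset.sum_add_distrib, Finset.sum_sub_distrib, hps, hqs]; ring
  rw [h]
  exact Finset.sum_nonneg fun i _ => aux_psi_nonneg (hp i) (hpq i) (hq i)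

private lemma aux_pinsker {ι : Type*} [Fintype ι] (p q : ι → ℝ)
    (hp : ∀ i, 0 ≤ p i) (hq : ∀ i, 0 ≤ q i)
    (hps : ∑ i, p i = 1) (hqs : ∑ i, q i = 1) (hpq : ∀ i, 0 < p i → 0 < q i) :
    1 - ∑ i, min (q i) (p i) ≤ Real.sqrt ((∑ i, p i * Real.log (p i / q i)) / 2) := by
  set K := ∑ i, p i * Real.log (p i / q i) with hK
  have hK0 : 0 ≤ K := aux_kl_nonneg p q hp hq hps hqs hpq
  set ψ := fun i => p i * Real.log (p i / q i) - p i + q i with hψ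
  have hψ0 : ∀ i, 0 ≤ ψ i := fun i => aux_psi_nonneg (hp i) (hpq i) (hq i)
  have hψsum : ∑ i, ψ i = K := by
    rw [hψ, Finset.sum_add_distrib, Finset.sum_sub_distrib, hps, hqs, hK]; ring
  -- pointwise: |p i - q i| ≤ √(ψ i) * √((2 p i + 4 q i)/3)
  have hstep : ∀ i, |p i - q i| ≤ Real.sqrt (ψ i) * Real.sqrt ((2*p i+4*q i)/3) := by
    intro i
    have hc : 0 ≤ (2*p i+4*q i)/3 := by have := hp i; have := hq i; positivity
    rw [← Real.sqrt_mul (hψ0 i), ← Real.sqrt_sq_eq_abs (p i - q i)]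
    apply Real.sqrt_le_sqrt
    have := aux_pointwise (hp i) (hq i) (hpq i)
    nlinarith [this]
  have hCS : ∑ i, Real.sqrt (ψ i) * Real.sqrt ((2*p i+4*q i)/3)
      ≤ Real.sqrt K * Real.sqrt 2 := by
    have := Real.sum_sqrt_mul_sqrt_le (Finset.univ : Finset ι) hψ0
      (fun i => by have := hp i; have := hq i; positivity :
        ∀ i, 0 ≤ (2*p i+4*q i)/3)
    rw [hψsum] at this
    convert this using 3
    rw [← Finset.sum_div, Finset.sum_add_distrib, ← Finset.mul_sum, ← Finset.mul_sum,
      hps, hqs]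
    norm_num
  have habs : ∑ i, |p i - q i| ≤ Real.sqrt K * Real.sqrt 2 :=
    le_trans (Finset.sum_le_sum fun i _ => hstep i) hCS
  have hmin : ∑ i, min (q i) (p i) = 1 - (∑ i, |p i - q i|)/2 := by
    have : ∀ i, min (q i) (p i) = (p i + q i - |p i - q i|)/2 := by
      intro i
      rcases le_total (p i) (q i) with h | h
      · rw [min_eq_right h, abs_of_nonpos (by linarith)]; ring
      · rw [min_eq_left h, abs_of_nonneg (by linarith)]; ring
    rw [Finset.sum_congr rfl fun i _ => this i]
    rw [← Finset.sum_div, Finset.sum_sub_distrib, Finset.sum_add_distrib, hps, hqs]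
    ring
  rw [hmin]
  have h4 : Real.sqrt 4 = 2 := by
    rw [show (4:ℝ) = 2^2 by norm_num]; exact Real.sqrt_sq (by norm_num)
  have hfinal : Real.sqrt K * Real.sqrt 2 = Real.sqrt (K/2) * 2 := by
    rw [← Real.sqrt_mul hK0 2, show K*2 = (K/2)*4 by ring,
      Real.sqrt_mul (by linarith : (0:ℝ) ≤ K/2), h4]
  linarith

private lemma aux_sum_prod {m : ℕ} {Z : Type*} [Fintype Z] (f : Fin m → Z → ℝ) :
    ∑ S : Fin m → Z, ∏ j, f j (S j) = ∏ j, ∑ z, f j z := by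
  classical
  have h := Finset.prod_univ_sum (fun _ : Fin m => (Finset.univ : Finset Z)) f
  rw [Fintype.piFinset_univ] at h
  exact h.symm

private lemma aux_coord {Z : Type*} [Fintype Z] [DecidableEq Z] {m : ℕ} (P : Z → ℝ)
    (hsum : ∑ z, P z = 1) (i : Fin m) (z : Z) :
    ∑ S : Fin m → Z, (if S i = z then (∏ j, P (S j)) else 0) = P z := by
  classical
  have h1 : ∀ S : Fin m → Z, (if S i = z then (∏ j, P (S j)) else 0)
      = ∏ j, (if j = i then (if S j = z then P (S j) else 0) else P (S j)) := by
    intro S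
    rcases eq_or_ne (S i) z with h | h
    · rw [if_pos h]
      apply Finset.prod_congr rfl
      intro j _
      rcases eq_or_ne j i with hj | hj
      · subst hj; simp [h]
      · simp [hj]
    · rw [if_neg h]
      symm
      apply Finset.prod_eq_zero (Finset.mem_univ i)
      simp [h]
  rw [Finset.sum_congr rfl fun S _ => h1 S,
    aux_sum_prod (fun j w => if j = i then (if w = z then P w else 0) else P w)]
  rw [Finset.prod_eq_single i]
  · simp
  · intro j _ hj
    rw [Finset.sum_congr rfl (fun w _ => if_neg hj)]
    exact hsum
  · simp
/-- Total variation distance between two pmfs: `1 - ∑ min`. -/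
noncomputable def tv {A : Type*} (p q : A → ℝ) : ℝ := 1 - ∑' a, min (p a) (q a)

/-- `p` is a probability mass function: nonnegative and summing to `1`. -/
def IsPMF {A : Type*} (p : A → ℝ) : Prop := (∀ a, 0 ≤ p a) ∧ HasSum p 1

/-- Product pmf `P^{⊗m}` of `m` i.i.d. draws from `P`. -/
noncomputable def prodPMF {Z : Type*} (m : ℕ) (P : Z → ℝ) (S : Fin m → Z) : ℝ :=
  ∏ i, P (S i)

/-- Joint pmf of a uniformly drawn training example `Z_trn` and the inferred
hypothesis `H`: `μ(z,h) = ∑_S P^{⊗m}(S) · (1/m)∑_i 1{S_i = z} · Q(h|S)`. -/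
noncomputable def jointZH {Z H : Type*} (m : ℕ) (P : Z → ℝ)
    (Q : (Fin m → Z) → H → ℝ) (z : Z) (h : H) : ℝ :=
  haveI := Classical.decEq Z
  ∑' S : Fin m → Z,
    prodPMF m P S * ((1 / (m : ℝ)) * ∑ i, if S i = z then (1 : ℝ) else 0) * Q S h

/-- Marginal of `Z_trn` under the joint pmf `jointZH`. -/
noncomputable def margZ {Z H : Type*} (m : ℕ) (P : Z → ℝ)
    (Q : (Fin m → Z) → H → ℝ) (z : Z) : ℝ :=
  ∑' h : H, jointZH m P Q z h

/-- Marginal of the hypothesis `H` under the joint pmf `jointZH`. -/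
noncomputable def margH {Z H : Type*} (m : ℕ) (P : Z → ℝ)
    (Q : (Fin m → Z) → H → ℝ) (h : H) : ℝ :=
  ∑' z : Z, jointZH m P Q z h

/-- Mutual affinity `I(Z_trn, H) = ‖μ_Z ⊗ μ_H, μ‖`. -/
noncomputable def affinity {Z H : Type*} (m : ℕ) (P : Z → ℝ)
    (Q : (Fin m → Z) → H → ℝ) : ℝ :=
  tv (fun p : Z × H => margZ m P Q p.1 * margH m P Q p.2)
    (fun p : Z × H => jointZH m P Q p.1 p.2)

/-- True risk `R(𝓛) = ∑_S P^{⊗m}(S) ∑_h Q(h|S) ∑_z P(z)·L(h,z)`. -/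
noncomputable def trueRisk {Z H : Type*} (m : ℕ) (P : Z → ℝ)
    (Q : (Fin m → Z) → H → ℝ) (L : H → Z → ℝ) : ℝ :=
  ∑' S : Fin m → Z, prodPMF m P S * ∑' h : H, Q S h * ∑' z : Z, P z * L h z

/-- Empirical risk `R_emp(𝓛) = ∑_S P^{⊗m}(S) ∑_h Q(h|S)·(1/m)∑_i L(h,S_i)`. -/
noncomputable def empRisk {Z H : Type*} (m : ℕ) (P : Z → ℝ)
    (Q : (Fin m → Z) → H → ℝ) (L : H → Z → ℝ) : ℝ :=
  ∑' S : Fin m → Z, prodPMF m P S * ∑' h : H, Q S h * ((1 / (m : ℝ)) * ∑ i, L h (S i))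

/-- Learning capacity `C^(m)(𝓛) = sup_P I(Z_trn, H)`. -/
noncomputable def capacity {Z H : Type*} (m : ℕ)
    (Q : (Fin m → Z) → H → ℝ) : ℝ :=
  sSup {c : ℝ | ∃ P : Z → ℝ, IsPMF P ∧ c = affinity m P Q}

theorem stmt15 {Z H : Type*} [Fintype Z] [Fintype H] (m : ℕ) (hm : 1 ≤ m)
    (P : Z → ℝ) (hP : IsPMF P)
    (Q : (Fin m → Z) → H → ℝ) (hQ : ∀ S, IsPMF (Q S))
    (hperm : ∀ (S : Fin m → Z) (σ : Equiv.Perm (Fin m)), Q (S ∘ σ) = Q S)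
    (ν : (Fin m → Z) × H → ℝ) (hν : ∀ S h, ν (S, h) = prodPMF m P S * Q S h)
    (ν₁ : (Fin m → Z) → ℝ) (hν₁ : ∀ S, ν₁ S = ∑' h : H, ν (S, h))
    (ν₂ : H → ℝ) (hν₂ : ∀ h, ν₂ h = ∑' S : Fin m → Z, ν (S, h))
    (MI : ℝ)
    (hMI : MI = ∑' p : (Fin m → Z) × H,
      if 0 < ν p then ν p * Real.log (ν p / (ν₁ p.1 * ν₂ p.2)) else 0) :
    affinity m P Q ≤ Real.sqrt (MI / (2 * m)) := by
  classical
  have hm0 : (0:ℝ) < (m:ℝ) := by exact_mod_cast Nat.lt_of_lt_of_le Nat.zero_lt_one hm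
  have hP0 : ∀ z, 0 ≤ P z := hP.1
  have hPsum : ∑ z, P z = 1 := (hasSum_fintype P).unique hP.2
  have hQ0 : ∀ S h, 0 ≤ Q S h := fun S => (hQ S).1
  have hQsum : ∀ S, ∑ h, Q S h = 1 := fun S => (hasSum_fintype (Q S)).unique (hQ S).2
  have hprod0 : ∀ S : Fin m → Z, 0 ≤ prodPMF m P S :=
    fun S => Finset.prod_nonneg (fun j _ => hP0 _)
  have hν0 : ∀ (S : Fin m → Z) h, 0 ≤ ν (S, h) := fun S h => by
    rw [hν]; exact mul_nonneg (hprod0 S) (hQ0 S h)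
  have hprodsum : ∑ S : Fin m → Z, prodPMF m P S = 1 := by
    show ∑ S : Fin m → Z, ∏ j, P (S j) = 1
    rw [aux_sum_prod (fun _ z => P z)]
    simp [hPsum]
  have hν₁' : ∀ S, ν₁ S = prodPMF m P S := by
    intro S
    rw [hν₁, tsum_fintype]
    simp only [hν]
    rw [← Finset.mul_sum, hQsum, mul_one]
  have hν₂' : ∀ h, ν₂ h = ∑ S : Fin m → Z, ν (S, h) := fun h => by rw [hν₂, tsum_fintype]
  have hν₂0 : ∀ h, 0 ≤ ν₂ h := fun h => by
    rw [hν₂']; exact Finset.sum_nonneg fun S _ => hν0 S h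
  have hνSsum : ∀ S : Fin m → Z, ∑ h, ν (S, h) = prodPMF m P S := by
    intro S; simp only [hν]; rw [← Finset.mul_sum, hQsum, mul_one]
  have hν₂sum : ∑ h, ν₂ h = 1 := by
    simp only [hν₂']
    rw [Finset.sum_comm]
    rw [Finset.sum_congr rfl fun S _ => hνSsum S]
    exact hprodsum
  -- the per-coordinate joint pmfs
  set p : Fin m → Z → H → ℝ :=
    fun i z h => ∑ S : Fin m → Z, if S i = z then ν (S, h) else 0 with hpdef
  have hp0 : ∀ i z h, 0 ≤ p i z h := fun i z h =>
    Finset.sum_nonneg fun S _ => by by_cases hc : S i = z <;> simp [hc, hν0 S h]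
  have hpsumz : ∀ i h, ∑ z, p i z h = ν₂ h := by
    intro i h
    rw [hpdef, Finset.sum_comm, hν₂' h]
    apply Finset.sum_congr rfl
    intro S _
    rw [Finset.sum_ite_eq (Finset.univ : Finset Z) (S i) (fun _ => ν (S, h))]
    simp
  have hpsumh : ∀ i z, ∑ h, p i z h = P z := by
    intro i z
    rw [hpdef, Finset.sum_comm]
    have : ∀ S : Fin m → Z, (∑ h, if S i = z then ν (S, h) else 0)
        = (if S i = z then (∏ j, P (S j)) else 0) := by
      intro S
      by_cases hc : S i = z
      · simp only [hc, if_true]; exact hνSsum S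
      · simp [hc]
    rw [Finset.sum_congr rfl fun S _ => this S]
    exact aux_coord P hPsum i z
  have hpq : ∀ i z h, 0 < p i z h → 0 < P z ∧ 0 < ν₂ h := by
    intro i z h hpos
    obtain ⟨S, -, hS⟩ := Finset.exists_lt_of_sum_lt (by simpa using hpos :
      ∑ S : Fin m → Z, (0:ℝ) < ∑ S : Fin m → Z, if S i = z then ν (S, h) else 0)
    by_cases hc : S i = z
    · rw [if_pos hc] at hS
      have hν₂pos : 0 < ν₂ h := lt_of_lt_of_le hS (by
        rw [hν₂']
        exact Finset.single_le_sum (fun S' _ => hν0 S' h) (Finset.mem_univ S))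
      have hprodpos : 0 < prodPMF m P S := by
        rcases (hprod0 S).lt_or_eq with h' | h'
        · exact h'
        · exfalso; rw [hν, ← h', zero_mul] at hS; exact lt_irrefl 0 hS
      have hPpos : 0 < P (S i) := by
        rcases (hP0 (S i)).lt_or_eq with h' | h'
        · exact h'
        · exfalso
          have : prodPMF m P S = 0 :=
            Finset.prod_eq_zero (Finset.mem_univ i) h'.symm
          rw [this] at hprodpos; exact lt_irrefl 0 hprodpos
      exact ⟨hc ▸ hPpos, hν₂pos⟩
    · rw [if_neg hc] at hS; exact absurd hS (lt_irrefl 0)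
  -- joint and marginals
  have hjoint : ∀ z h, jointZH m P Q z h = (1/(m:ℝ)) * ∑ i, p i z h := by
    intro z h
    rw [jointZH, tsum_fintype]
    have : ∀ S : Fin m → Z,
        prodPMF m P S * ((1 / (m : ℝ)) * ∑ i, if S i = z then (1:ℝ) else 0) * Q S h
        = (1/(m:ℝ)) * ∑ i, (if S i = z then ν (S, h) else 0) := by
      intro S
      rw [Finset.mul_sum, Finset.mul_sum, Finset.mul_sum, Finset.sum_mul]
      apply Finset.sum_congr rfl
      intro i _
      by_cases hc : S i = z
      · simp only [hc, if_true, hν]; ring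
      · simp [hc]
    rw [Finset.sum_congr rfl fun S _ => this S, ← Finset.mul_sum, Finset.sum_comm]
  have hmargZ : ∀ z, margZ m P Q z = P z := by
    intro z
    rw [margZ, tsum_fintype, Finset.sum_congr rfl fun h _ => hjoint z h,
      ← Finset.mul_sum, Finset.sum_comm,
      Finset.sum_congr rfl fun i (_ : i ∈ Finset.univ) => hpsumh i z]
    rw [Finset.sum_const, Finset.card_fin, nsmul_eq_mul]
    field_simp
  have hmargH : ∀ h, margH m P Q h = ν₂ h := by
    intro h
    rw [margH, tsum_fintype, Finset.sum_congr rfl fun z _ => hjoint z h,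
      ← Finset.mul_sum, Finset.sum_comm,
      Finset.sum_congr rfl fun i (_ : i ∈ Finset.univ) => hpsumz i h]
    rw [Finset.sum_const, Finset.card_fin, nsmul_eq_mul]
    field_simp
  -- KL divergences of the per-coordinate joints
  set KL : Fin m → ℝ := fun i => ∑ zh : Z × H,
    p i zh.1 zh.2 * Real.log (p i zh.1 zh.2 / (P zh.1 * ν₂ zh.2)) with hKLdef
  have hqprop : ∀ zh : Z × H, 0 ≤ P zh.1 * ν₂ zh.2 :=
    fun zh => mul_nonneg (hP0 _) (hν₂0 _)
  have hqsum1 : ∑ zh : Z × H, P zh.1 * ν₂ zh.2 = 1 := by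
    rw [Fintype.sum_prod_type]
    rw [Finset.sum_congr rfl fun z (_ : z ∈ Finset.univ) =>
      (by rw [← Finset.mul_sum, hν₂sum, mul_one] : ∑ h, P z * ν₂ h = P z)]
    exact hPsum
  have hpsum1 : ∀ i, ∑ zh : Z × H, p i zh.1 zh.2 = 1 := by
    intro i
    rw [Fintype.sum_prod_type]
    rw [Finset.sum_congr rfl fun z (_ : z ∈ Finset.univ) => hpsumh i z]
    exact hPsum
  have hpqpos : ∀ i (zh : Z × H), 0 < p i zh.1 zh.2 → 0 < P zh.1 * ν₂ zh.2 := by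
    intro i zh hpos
    obtain ⟨h1, h2⟩ := hpq i zh.1 zh.2 hpos
    exact mul_pos h1 h2
  have hKL0 : ∀ i, 0 ≤ KL i := fun i =>
    aux_kl_nonneg _ _ (fun zh => hp0 i zh.1 zh.2) hqprop (hpsum1 i) hqsum1 (hpqpos i)
  have hpinsker : ∀ i, 1 - ∑ zh : Z × H, min (P zh.1 * ν₂ zh.2) (p i zh.1 zh.2)
      ≤ Real.sqrt (KL i / 2) := fun i =>
    aux_pinsker _ _ (fun zh => hp0 i zh.1 zh.2) hqprop (hpsum1 i) hqsum1 (hpqpos i)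
  -- Step A : affinity ≤ average of per-coordinate TVs
  have stepA : affinity m P Q
      ≤ (1/(m:ℝ)) * ∑ i, (1 - ∑ zh : Z × H, min (P zh.1 * ν₂ zh.2) (p i zh.1 zh.2)) := by
    rw [affinity, tv, tsum_fintype]
    have hptwise : ∀ zh : Z × H,
        (1/(m:ℝ)) * ∑ i, min (P zh.1 * ν₂ zh.2) (p i zh.1 zh.2)
        ≤ min (margZ m P Q zh.1 * margH m P Q zh.2) (jointZH m P Q zh.1 zh.2) := by
      intro zh
      rw [hmargZ, hmargH, hjoint]
      apply le_min
      · have : ∑ i, min (P zh.1 * ν₂ zh.2) (p i zh.1 zh.2)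
            ≤ ∑ i : Fin m, P zh.1 * ν₂ zh.2 :=
          Finset.sum_le_sum fun i _ => min_le_left _ _
        rw [Finset.sum_const, Finset.card_fin, nsmul_eq_mul] at this
        calc (1/(m:ℝ)) * ∑ i, min (P zh.1 * ν₂ zh.2) (p i zh.1 zh.2)
            ≤ (1/(m:ℝ)) * ((m:ℝ) * (P zh.1 * ν₂ zh.2)) := by
              apply mul_le_mul_of_nonneg_left this (by positivity)
          _ = P zh.1 * ν₂ zh.2 := by field_simp
      · apply mul_le_mul_of_nonneg_left _ (by positivity : (0:ℝ) ≤ 1/(m:ℝ))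
        exact Finset.sum_le_sum fun i _ => min_le_right _ _
    have hsum : ∑ zh : Z × H, (1/(m:ℝ)) * ∑ i, min (P zh.1 * ν₂ zh.2) (p i zh.1 zh.2)
        ≤ ∑ zh : Z × H, min (margZ m P Q zh.1 * margH m P Q zh.2) (jointZH m P Q zh.1 zh.2) :=
      Finset.sum_le_sum fun zh _ => hptwise zh
    rw [← Finset.mul_sum, Finset.sum_comm] at hsum
    have hsplit : (1/(m:ℝ)) * ∑ i : Fin m,
        (1 - ∑ zh : Z × H, min (P zh.1 * ν₂ zh.2) (p i zh.1 zh.2))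
        = 1 - (1/(m:ℝ)) * ∑ i : Fin m, ∑ zh : Z × H,
            min (P zh.1 * ν₂ zh.2) (p i zh.1 zh.2) := by
      rw [Finset.sum_sub_distrib, Finset.sum_const, Finset.card_fin, nsmul_eq_mul,
        mul_one, mul_sub]
      field_simp
    rw [hsplit]
    linarith
  -- Step C : averaging square roots
  have stepC : (1/(m:ℝ)) * ∑ i, Real.sqrt (KL i / 2)
      ≤ Real.sqrt ((∑ i, KL i) / (2*(m:ℝ))) := by
    have hCS : ∑ i : Fin m, Real.sqrt (KL i / 2) * Real.sqrt 1
        ≤ Real.sqrt (∑ i, KL i / 2) * Real.sqrt (∑ i : Fin m, (1:ℝ)) :=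
      Real.sum_sqrt_mul_sqrt_le _ (fun i => by have := hKL0 i; positivity) (fun i => zero_le_one)
    rw [Real.sqrt_one] at hCS
    simp only [mul_one] at hCS
    rw [Finset.sum_const, Finset.card_fin, nsmul_eq_mul, mul_one, ← Finset.sum_div] at hCS
    have hKLsum0 : 0 ≤ ∑ i, KL i := Finset.sum_nonneg fun i _ => hKL0 i
    have hrhs : Real.sqrt ((∑ i, KL i) / 2) * Real.sqrt (m:ℝ)
        = (m:ℝ) * Real.sqrt ((∑ i, KL i) / (2*(m:ℝ))) := by
      rw [← Real.sqrt_mul (by positivity : (0:ℝ) ≤ (∑ i, KL i)/2)]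
      rw [show (m:ℝ) * Real.sqrt ((∑ i, KL i) / (2*(m:ℝ)))
          = Real.sqrt ((m:ℝ)^2) * Real.sqrt ((∑ i, KL i) / (2*(m:ℝ))) by
        rw [Real.sqrt_sq hm0.le]]
      rw [← Real.sqrt_mul (by positivity : (0:ℝ) ≤ ((m:ℝ))^2)]
      congr 1
      field_simp
    rw [hrhs] at hCS
    calc (1/(m:ℝ)) * ∑ i, Real.sqrt (KL i / 2)
        ≤ (1/(m:ℝ)) * ((m:ℝ) * Real.sqrt ((∑ i, KL i) / (2*(m:ℝ)))) := by
          apply mul_le_mul_of_nonneg_left hCS (by positivity)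
      _ = Real.sqrt ((∑ i, KL i) / (2*(m:ℝ))) := by field_simp
  -- Step D : superadditivity, ∑ KL i ≤ MI
  have stepD : ∑ i, KL i ≤ MI := by
    set lam : (Fin m → Z) → H → ℝ := fun S h => ν₂ h * ∏ i, (p i (S i) h / ν₂ h) with hlamdef
    have hlam0 : ∀ S h, 0 ≤ lam S h := fun S h =>
      mul_nonneg (hν₂0 h) (Finset.prod_nonneg fun i _ => div_nonneg (hp0 i (S i) h) (hν₂0 h))
    set c : (Fin m → Z) → H → ℝ :=
      fun S h => ∑ i, Real.log (p i (S i) h / (P (S i) * ν₂ h)) with hcdef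
    have hD1 : ∑ i, KL i = ∑ S : Fin m → Z, ∑ h, ν (S, h) * c S h := by
      have hKLi : ∀ i, KL i = ∑ S : Fin m → Z, ∑ h,
          ν (S, h) * Real.log (p i (S i) h / (P (S i) * ν₂ h)) := by
        intro i
        rw [hKLdef]
        simp only []
        rw [Fintype.sum_prod_type, Finset.sum_comm]
        rw [show (∑ S : Fin m → Z, ∑ h, ν (S, h) * Real.log (p i (S i) h / (P (S i) * ν₂ h)))
            = ∑ h, ∑ S : Fin m → Z, ν (S, h) * Real.log (p i (S i) h / (P (S i) * ν₂ h))
          from Finset.sum_comm]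
        apply Finset.sum_congr rfl
        intro h _
        have hz : ∀ z, p i z h * Real.log (p i z h / (P z * ν₂ h))
            = ∑ S : Fin m → Z,
              (if S i = z then ν (S, h) * Real.log (p i z h / (P z * ν₂ h)) else 0) := by
          intro z
          calc p i z h * Real.log (p i z h / (P z * ν₂ h))
              = ∑ S : Fin m → Z,
                (if S i = z then ν (S, h) else 0) * Real.log (p i z h / (P z * ν₂ h)) := by
                rw [← Finset.sum_mul]
            _ = ∑ S : Fin m → Z,
                (if S i = z then ν (S, h) * Real.log (p i z h / (P z * ν₂ h)) else 0) := by
                apply Finset.sum_congr rfl; intro S _; rw [ite_mul, zero_mul]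
        rw [Finset.sum_congr rfl fun z _ => hz z, Finset.sum_comm]
        apply Finset.sum_congr rfl
        intro S _
        rw [Finset.sum_ite_eq Finset.univ (S i)
          (fun z => ν (S, h) * Real.log (p i z h / (P z * ν₂ h)))]
        simp
      rw [Finset.sum_congr rfl fun i (_ : i ∈ Finset.univ) => hKLi i, Finset.sum_comm]
      apply Finset.sum_congr rfl; intro S _
      rw [Finset.sum_comm]
      apply Finset.sum_congr rfl; intro h _
      rw [hcdef, ← Finset.mul_sum]
    have hMI' : MI = ∑ S : Fin m → Z, ∑ h,
        (if 0 < ν (S, h) then ν (S, h) * Real.log (ν (S, h) / (ν₁ S * ν₂ h)) else 0) := by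
      rw [hMI, tsum_fintype, Fintype.sum_prod_type]
    have key : ∀ (S : Fin m → Z) (h : H), ν (S, h) - lam S h
        ≤ (if 0 < ν (S, h) then ν (S, h) * Real.log (ν (S, h) / (ν₁ S * ν₂ h)) else 0)
          - ν (S, h) * c S h := by
      intro S h
      by_cases hpos : 0 < ν (S, h)
      · rw [if_pos hpos]
        have hprodpos : 0 < prodPMF m P S := by
          rcases (hprod0 S).lt_or_eq with h' | h'
          · exact h'
          · exfalso
            have := hpos
            rw [hν, ← h', zero_mul] at this
            exact lt_irrefl 0 this
        have hν₂pos : 0 < ν₂ h := lt_of_lt_of_le hpos (by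
          rw [hν₂']
          exact Finset.single_le_sum (fun S' _ => hν0 S' h) (Finset.mem_univ S))
        have hPpos : ∀ i : Fin m, 0 < P (S i) := by
          intro i
          rcases (hP0 (S i)).lt_or_eq with h' | h'
          · exact h'
          · exfalso
            have : prodPMF m P S = 0 := Finset.prod_eq_zero (Finset.mem_univ i) h'.symm
            rw [this] at hprodpos; exact lt_irrefl 0 hprodpos
        have hppos : ∀ i : Fin m, 0 < p i (S i) h := by
          intro i
          refine lt_of_lt_of_le hpos ?_
          have := Finset.single_le_sum
            (f := fun S' : Fin m → Z => if S' i = S i then ν (S', h) else 0)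
            (fun S' _ => by by_cases hc : S' i = S i <;> simp [hc, hν0 S' h])
            (Finset.mem_univ S)
          simpa using this
        have hν₁pos : 0 < ν₁ S := by rw [hν₁']; exact hprodpos
        have hlampos : 0 < lam S h :=
          mul_pos hν₂pos (Finset.prod_pos fun i _ => div_pos (hppos i) hν₂pos)
        have e1 : Real.log (ν (S, h) / (ν₁ S * ν₂ h))
            = Real.log (ν (S, h)) - ((∑ i, Real.log (P (S i))) + Real.log (ν₂ h)) := by
          rw [Real.log_div hpos.ne' (mul_pos hν₁pos hν₂pos).ne',
            Real.log_mul hν₁pos.ne' hν₂pos.ne', hν₁' S, prodPMF,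
            Real.log_prod (fun i _ => (hPpos i).ne')]
        have e2 : c S h = ∑ i, (Real.log (p i (S i) h)
            - (Real.log (P (S i)) + Real.log (ν₂ h))) := by
          rw [hcdef]
          apply Finset.sum_congr rfl
          intro i _
          rw [Real.log_div (hppos i).ne' (mul_pos (hPpos i) hν₂pos).ne',
            Real.log_mul (hPpos i).ne' hν₂pos.ne']
        have e3 : Real.log (lam S h) = Real.log (ν₂ h)
            + ∑ i, (Real.log (p i (S i) h) - Real.log (ν₂ h)) := by
          rw [hlamdef]
          simp only []
          rw [Real.log_mul hν₂pos.ne'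
            (Finset.prod_pos fun i _ => div_pos (hppos i) hν₂pos).ne',
            Real.log_prod (fun i _ => (div_pos (hppos i) hν₂pos).ne')]
          congr 1
          exact Finset.sum_congr rfl fun i _ => Real.log_div (hppos i).ne' hν₂pos.ne'
        have e4 : Real.log (ν (S, h) / (ν₁ S * ν₂ h)) - c S h
            = Real.log (ν (S, h)) - Real.log (lam S h) := by
          rw [e1, e2, e3]
          rw [Finset.sum_sub_distrib, Finset.sum_sub_distrib, Finset.sum_add_distrib,
            Finset.sum_const, Finset.card_fin, nsmul_eq_mul]
          ring
        have e5 : 1 - lam S h / ν (S, h) ≤ Real.log (ν (S, h)) - Real.log (lam S h) := by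
          have := Real.log_le_sub_one_of_pos (div_pos hlampos hpos)
          rw [Real.log_div hlampos.ne' hpos.ne'] at this
          linarith
        have e6 : ν (S, h) * (1 - lam S h / ν (S, h)) = ν (S, h) - lam S h := by
          field_simp
        have e7 := mul_le_mul_of_nonneg_left e5 hpos.le
        rw [e6] at e7
        calc ν (S, h) - lam S h
            ≤ ν (S, h) * (Real.log (ν (S, h)) - Real.log (lam S h)) := e7
          _ = ν (S, h) * Real.log (ν (S, h) / (ν₁ S * ν₂ h)) - ν (S, h) * c S h := by
              rw [← e4]; ring
      · rw [if_neg hpos]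
        have hzero : ν (S, h) = 0 :=
          le_antisymm (not_lt.1 hpos) (hν0 S h)
        rw [hzero]
        simp only [zero_mul, zero_sub, sub_zero]
        linarith [hlam0 S h]
    have hνtot : ∑ S : Fin m → Z, ∑ h, ν (S, h) = 1 := by
      rw [Finset.sum_congr rfl fun S _ => hνSsum S]; exact hprodsum
    have hlamtot : ∑ S : Fin m → Z, ∑ h, lam S h ≤ 1 := by
      rw [Finset.sum_comm]
      have hh : ∀ h, ∑ S : Fin m → Z, lam S h ≤ ν₂ h := by
        intro h
        rw [hlamdef]
        simp only []
        rw [← Finset.mul_sum, aux_sum_prod (fun i z => p i z h / ν₂ h)]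
        by_cases hz : ν₂ h = 0
        · rw [hz]; simp
        · have h1 : ∀ i : Fin m, ∑ z, p i z h / ν₂ h = 1 := by
            intro i; rw [← Finset.sum_div, hpsumz, div_self hz]
          rw [Finset.prod_congr rfl fun i _ => h1 i, Finset.prod_const_one, mul_one]
      calc ∑ h, ∑ S : Fin m → Z, lam S h ≤ ∑ h, ν₂ h := Finset.sum_le_sum fun h _ => hh h
        _ = 1 := hν₂sum
    have hfinal : 1 - ∑ S : Fin m → Z, ∑ h, lam S h ≤ MI - ∑ i, KL i := by
      rw [hD1, hMI']
      have : ∑ S : Fin m → Z, ∑ h, (ν (S, h) - lam S h)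
          ≤ ∑ S : Fin m → Z, ∑ h,
            ((if 0 < ν (S, h) then ν (S, h) * Real.log (ν (S, h) / (ν₁ S * ν₂ h)) else 0)
              - ν (S, h) * c S h) :=
        Finset.sum_le_sum (fun S _ => Finset.sum_le_sum fun h _ => key S h)
      simp only [Finset.sum_sub_distrib] at this
      rw [hνtot] at this
      linarith
    linarith [hlamtot, hfinal]
  -- assemble
  have hMI0 : 0 ≤ MI := le_trans (Finset.sum_nonneg fun i _ => hKL0 i) stepD
  calc affinity m P Q
      ≤ (1/(m:ℝ)) * ∑ i, (1 - ∑ zh : Z × H, min (P zh.1 * ν₂ zh.2) (p i zh.1 zh.2)) := stepA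
    _ ≤ (1/(m:ℝ)) * ∑ i, Real.sqrt (KL i / 2) := by
        apply mul_le_mul_of_nonneg_left (Finset.sum_le_sum fun i _ => hpinsker i) (by positivity)
    _ ≤ Real.sqrt ((∑ i, KL i) / (2*(m:ℝ))) := stepC
    _ ≤ Real.sqrt (MI / (2*(m:ℝ))) := by
        apply Real.sqrt_le_sqrt
        gcongr
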